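/- Let m ≥ 1 be an integer and η > 0. (a) For every t ∈ ℝ^m, the open cube Q(t, η) equals the union over all a ∈ {−2/5, 2/5}^m of the open cubes Q(t + aη, 3η/5), where aη denotes the vector with coordinates a_i·η. (b) Set η̃ = (9/10)η and, for r ∈ ℤ^m, set t_r = ((2r_1+1)η̃, …, (2r_m+1)η̃). Then every point x ∈ ℝ^m belongs to at most 2^m of the cubes in the collection { Q(t_r + aη, 3η/5) : r ∈ ℤ^m, a ∈ {−2/5, 2/5}^m }. -/

import Mathlib

/-- The open cube `Q(t, ρ)` in `ℝ^m` centered at `t` with half-side `ρ`. -/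
def cube (m : ℕ) (t : Fin m → ℝ) (ρ : ℝ) : Set (Fin m → ℝ) :=
  {x | ∀ i, |x i - t i| < ρ}

/-- One-dimensional key lemma: for a fixed real `u`, there are at most two pairs
`(r, a)` with `a ∈ {-2/5, 2/5}` such that `u` lies in the interval of half-length
`3η/5` centered at `(2r+1)·(9/10)η + aη`. -/
lemma key (η : ℝ) (hη : 0 < η) (u : ℝ) :
    ∃ p q : ℤ × ℝ, ∀ (r : ℤ) (a : ℝ), (a = -(2 / 5) ∨ a = 2 / 5) →
      |u - ((2 * (r : ℝ) + 1) * (9 / 10 * η) + a * η)| < 3 * η / 5 →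
      (r, a) = p ∨ (r, a) = q := by
  set v : ℝ := 10 * u / η with hv
  set n : ℤ := ⌊(v + 13) / 18⌋ with hn
  have hn1 : 18 * (n : ℝ) - 13 ≤ v := by
    have := Int.floor_le ((v + 13) / 18)
    rw [← hn] at this
    linarith
  have hn2 : v < 18 * (n : ℝ) + 5 := by
    have := Int.lt_floor_add_one ((v + 13) / 18)
    rw [← hn] at this
    linarith
  have hkey : ∀ (r : ℤ) (a : ℝ),
      |u - ((2 * (r : ℝ) + 1) * (9 / 10 * η) + a * η)| < 3 * η / 5 →
      |v - (18 * (r : ℝ) + 9 + 10 * a)| < 6 := by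
    intro r a h
    have heq : v - (18 * (r : ℝ) + 9 + 10 * a)
        = (10 / η) * (u - ((2 * (r : ℝ) + 1) * (9 / 10 * η) + a * η)) := by
      rw [hv]; field_simp; ring
    rw [heq, abs_mul, abs_of_pos (by positivity : (0:ℝ) < 10 / η)]
    calc 10 / η * |u - ((2 * (r : ℝ) + 1) * (9 / 10 * η) + a * η)|
        < 10 / η * (3 * η / 5) := by
          exact mul_lt_mul_of_pos_left h (by positivity)
      _ = 6 := by field_simp; ring
  by_cases hb : v < 18 * (n : ℝ) - 1
  · refine ⟨(n - 1, -(2 / 5)), (n - 1, 2 / 5), ?_⟩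
    intro r a ha h
    have hk := hkey r a h
    rcases ha with rfl | rfl
    · -- a = -2/5, k = 18r + 5
      rcases abs_lt.mp hk with ⟨h1, h2⟩
      have hr1 : (n : ℝ) - 2 < r := by linarith
      have hr2 : (r : ℝ) < n + 1 := by linarith
      have hr1' : (n : ℤ) - 2 < r := by exact_mod_cast hr1
      have hr2' : r < n + 1 := by exact_mod_cast hr2
      have hr : r = n - 1 ∨ r = n := by omega
      rcases hr with hr | hr
      · left; rw [hr]
      · -- excluded: then v > 18n - 1, contradicting hb
        exfalso
        rw [hr] at h1
        push_cast at h1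
        linarith
    · -- a = 2/5, k = 18r + 13, forces r = n - 1
      rcases abs_lt.mp hk with ⟨h1, h2⟩
      have hr1 : (n : ℝ) - 2 < r := by linarith
      have hr2 : (r : ℝ) < n := by linarith
      have hr1' : (n : ℤ) - 2 < r := by exact_mod_cast hr1
      have hr2' : r < n := by exact_mod_cast hr2
      have hr : r = n - 1 := by omega
      right; rw [hr]
  · refine ⟨(n - 1, 2 / 5), (n, -(2 / 5)), ?_⟩
    push_neg at hb
    intro r a ha h
    have hk := hkey r a h
    rcases ha with rfl | rfl
    · rcases abs_lt.mp hk with ⟨h1, h2⟩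
      have hr1 : (n : ℝ) - 2 < r := by linarith
      have hr2 : (r : ℝ) < n + 1 := by linarith
      have hr1' : (n : ℤ) - 2 < r := by exact_mod_cast hr1
      have hr2' : r < n + 1 := by exact_mod_cast hr2
      have hr : r = n - 1 ∨ r = n := by omega
      rcases hr with hr | hr
      · -- excluded: k = 18n - 13, hence v < 18n - 7 < 18n - 1 ≤ v
        exfalso
        rw [hr] at h2
        push_cast at h2
        linarith
      · right; rw [hr]
    · rcases abs_lt.mp hk with ⟨h1, h2⟩
      have hr1 : (n : ℝ) - 2 < r := by linarith
      have hr2 : (r : ℝ) < n := by linarith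
      have hr1' : (n : ℤ) - 2 < r := by exact_mod_cast hr1
      have hr2' : r < n := by exact_mod_cast hr2
      have hr : r = n - 1 := by omega
      left; rw [hr]

theorem stmt6 (m : ℕ) (hm : 1 ≤ m) (η : ℝ) (hη : 0 < η) :
    -- (a) each cube of the grid is the union of its `2^m` shifted subcubes:
    (∀ t : Fin m → ℝ,
      cube m t η =
        ⋃ a ∈ {a : Fin m → ℝ | ∀ i, a i = -(2 / 5) ∨ a i = 2 / 5},
          cube m (fun i => t i + a i * η) (3 * η / 5)) ∧
    -- (b) every point of `ℝ^m` lies in at most `2^m` cubes of the refined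
    -- collection `{ Q(t_r + aη, 3η/5) : r ∈ ℤ^m, a ∈ {-2/5, 2/5}^m }`,
    -- where `t_r = ((2r₁+1)·(9/10)η, …, (2r_m+1)·(9/10)η)`:
    (∀ x : Fin m → ℝ,
      {q : (Fin m → ℤ) × (Fin m → ℝ) |
          (∀ i, q.2 i = -(2 / 5) ∨ q.2 i = 2 / 5) ∧
          x ∈ cube m
              (fun i => (2 * (q.1 i : ℝ) + 1) * (9 / 10 * η) + q.2 i * η)
              (3 * η / 5)}.Finite ∧
      {q : (Fin m → ℤ) × (Fin m → ℝ) |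
          (∀ i, q.2 i = -(2 / 5) ∨ q.2 i = 2 / 5) ∧
          x ∈ cube m
              (fun i => (2 * (q.1 i : ℝ) + 1) * (9 / 10 * η) + q.2 i * η)
              (3 * η / 5)}.ncard ≤ 2 ^ m) := by
  classical
  constructor
  · -- part (a)
    intro t
    ext x
    simp only [Set.mem_iUnion, Set.mem_setOf_eq]
    constructor
    · intro hx
      set a : Fin m → ℝ := fun i => if x i < t i then -(2 / 5) else 2 / 5 with hadef
      refine ⟨a, fun i => ?_, fun i => ?_⟩
      · rw [hadef]; dsimp only; split
        · left; rfl
        · right; rfl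
      · have h := abs_lt.mp (hx i)
        show |x i - (t i + a i * η)| < 3 * η / 5
        rw [hadef]; dsimp only
        by_cases hlt : x i < t i
        · rw [if_pos hlt, abs_lt]
          constructor <;> linarith [h.1, h.2]
        · rw [if_neg hlt]
          push_neg at hlt
          rw [abs_lt]
          constructor <;> linarith [h.1, h.2]
    · rintro ⟨a, ha, hc⟩
      intro i
      have h : |x i - (t i + a i * η)| < 3 * η / 5 := hc i
      rw [abs_lt] at h
      rcases ha i with h' | h' <;> rw [h'] at h <;> rw [abs_lt] <;>
        constructor <;> linarith [h.1, h.2]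
  · -- part (b)
    intro x
    choose p q hpq using fun i => key η hη (x i)
    set g : (Fin m → Bool) → (Fin m → ℤ) × (Fin m → ℝ) :=
      fun b => (fun i => if b i then (p i).1 else (q i).1,
                fun i => if b i then (p i).2 else (q i).2) with hg
    have hsub : {q' : (Fin m → ℤ) × (Fin m → ℝ) |
          (∀ i, q'.2 i = -(2 / 5) ∨ q'.2 i = 2 / 5) ∧
          x ∈ cube m
              (fun i => (2 * (q'.1 i : ℝ) + 1) * (9 / 10 * η) + q'.2 i * η)
              (3 * η / 5)} ⊆ Set.range g := by
      rintro ⟨rr, aa⟩ ⟨ha, hc⟩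
      have hmem : ∀ i, (rr i, aa i) = p i ∨ (rr i, aa i) = q i := by
        intro i
        exact hpq i (rr i) (aa i) (ha i) (hc i)
      refine ⟨fun i => if (rr i, aa i) = p i then true else false, ?_⟩
      simp only [hg]
      refine Prod.ext ?_ ?_ <;> funext i <;> dsimp only <;>
      · by_cases hd : (rr i, aa i) = p i
        · simp only [if_pos hd]
          simp [← hd]
        · have hq : (rr i, aa i) = q i := (hmem i).resolve_left hd
          simp only [if_neg hd]
          simp [← hq]
    have hfin := (Set.finite_range g).subset hsub
    refine ⟨hfin, ?_⟩
    calc _ ≤ (Set.range g).ncard :=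
          Set.ncard_le_ncard hsub (Set.finite_range g)
      _ = (g '' Set.univ).ncard := by rw [Set.image_univ]
      _ ≤ (Set.univ : Set (Fin m → Bool)).ncard :=
          Set.ncard_image_le Set.finite_univ
      _ = Nat.card (Fin m → Bool) := Set.ncard_univ _
      _ = 2 ^ m := by simp [Nat.card_eq_fintype_card]
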